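/- Let n be odd, let k be a positive integer with gcd(k, n) = 1, and let a, b, c be elements of L = GF(2^n). Then \sum_{x \in L} (-1)^{Tr(a x + b x^{2^{2k}-2^k+1} + c x^{2^{4k}-2^{3k}+2^{2k}-2^k+1})} = \sum_{x \in L} (-1)^{Tr(a x^{2^k+1} + b x^{2^{3k}+1} + c x^{2^{5k}+1})}. -/

import Mathlib

noncomputable instance {n : ℕ} : Fintype (GaloisField 2 n) := Fintype.ofFinite _

lemma aux_coprime {k n : ℕ} (hn : Odd n) (hk : 0 < k) (hkn : Nat.gcd k n = 1) :
    Nat.Coprime (2 ^ n - 1) (2 ^ k + 1) := by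
  have hn0 : n ≠ 0 := by rintro rfl; simp at hn
  set d := Nat.gcd (2 ^ n - 1) (2 ^ k + 1) with hd
  have hdpos : 0 < d := Nat.gcd_pos_of_pos_right _ (by positivity)
  have hd1 : d ∣ 2 ^ n - 1 := Nat.gcd_dvd_left _ _
  have hd2 : d ∣ 2 ^ (2 * k) - 1 := by
    refine (Nat.gcd_dvd_right (2 ^ n - 1) (2 ^ k + 1)).trans ?_
    have : 2 ^ (2 * k) - 1 = (2 ^ k + 1) * (2 ^ k - 1) := by
      have h1 : 1 ≤ 2 ^ k := Nat.one_le_two_pow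
      zify [h1, Nat.one_le_two_pow (n := 2 * k)]
      have e2 : (2:ℤ) ^ (2 * k) = 2 ^ k * 2 ^ k := by rw [two_mul, pow_add]
      rw [e2]; ring
    rw [this]; exact Dvd.intro _ rfl
  have hg : Nat.gcd (2 * k) n = 1 := Nat.Coprime.mul (Nat.coprime_two_left.mpr hn) hkn
  haveI : NeZero d := ⟨hdpos.ne'⟩
  have key : ∀ m : ℕ, d ∣ 2 ^ m - 1 → ((2 : ZMod d)) ^ m = 1 := by
    intro m hm
    have h1 : 1 ≤ 2 ^ m := Nat.one_le_two_pow
    have : (2 ^ m : ℕ) ≡ 1 [MOD d] := (Nat.modEq_iff_dvd' h1).mpr hm |>.symm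
    have := (ZMod.natCast_eq_natCast_iff _ _ _).mpr this
    push_cast at this
    exact this
  have h2k : ((2 : ZMod d)) ^ (2 * k) = 1 := key _ hd2
  have hnn : ((2 : ZMod d)) ^ n = 1 := key _ hd1
  have := (pow_gcd_eq_one (a := (2 : ZMod d))).mpr ⟨h2k, hnn⟩
  rw [hg, pow_one] at this
  have h0 : ((1 : ℕ) : ZMod d) = 0 := by
    have h := sub_eq_zero_of_eq this
    rw [show (2 : ZMod d) - 1 = 1 from by ring] at h
    rwa [Nat.cast_one]
  have hdvd : d ∣ 1 := (ZMod.natCast_eq_zero_iff 1 d).mp h0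
  exact Nat.dvd_one.mp hdvd

lemma aux_bij {k n : ℕ} (hn : Odd n) (hk : 0 < k) (hkn : Nat.gcd k n = 1) :
    Function.Bijective (fun x : GaloisField 2 n => x ^ (2 ^ k + 1)) := by
  have hn0 : n ≠ 0 := by rintro rfl; simp at hn
  have hcard : Nat.card (GaloisField 2 n) = 2 ^ n := GaloisField.card 2 n hn0
  have hcard' : Nat.card (GaloisField 2 n)ˣ = 2 ^ n - 1 := by
    rw [Nat.card_units, hcard]
  have hco : (Nat.card (GaloisField 2 n)ˣ).Coprime (2 ^ k + 1) := by
    rw [hcard']; exact aux_coprime hn hk hkn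
  have hm : (2 ^ k + 1) ≠ 0 := by positivity
  refine Finite.injective_iff_bijective.mp ?_
  intro x y hxy
  simp only at hxy
  rcases eq_or_ne y 0 with rfl | hy
  · rw [zero_pow hm] at hxy
    exact pow_eq_zero_iff hm |>.mp hxy
  · have hx : x ≠ 0 := by
      rintro rfl
      rw [zero_pow hm] at hxy
      exact hy (pow_eq_zero_iff hm |>.mp hxy.symm)
    have : (Units.mk0 x hx) ^ (2 ^ k + 1) = (Units.mk0 y hy) ^ (2 ^ k + 1) := by
      ext; push_cast; exact hxy
    have := (powCoprime hco).injective this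
    simpa [Units.ext_iff] using this

lemma aux_exp1 {t : ℕ} (ht : 1 ≤ t) : (2 ^ t + 1) * (2 ^ (2 * t) - 2 ^ t + 1) = 2 ^ (3 * t) + 1 := by
  have h1 : 2 ^ t ≤ 2 ^ (2 * t) := Nat.pow_le_pow_right (by norm_num) (by omega)
  have h2 : 2 ^ (2 * t) = 2 ^ t * 2 ^ t := by rw [two_mul, pow_add]
  have h3 : 2 ^ (3 * t) = 2 ^ t * 2 ^ t * 2 ^ t := by
    rw [show 3 * t = t + t + t by ring, pow_add, pow_add]
  zify [h1]
  have e2 : (2:ℤ) ^ (2 * t) = 2 ^ t * 2 ^ t := by rw [two_mul, pow_add]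
  have e3 : (2:ℤ) ^ (3 * t) = 2 ^ t * 2 ^ t * 2 ^ t := by
    rw [show 3 * t = t + t + t by ring, pow_add, pow_add]
  rw [e2, e3]; ring

lemma aux_exp2 {t : ℕ} (ht : 1 ≤ t) :
    (2 ^ t + 1) * (2 ^ (4 * t) - 2 ^ (3 * t) + 2 ^ (2 * t) - 2 ^ t + 1) = 2 ^ (5 * t) + 1 := by
  have hle : ∀ a b : ℕ, a ≤ b → 2 ^ a ≤ 2 ^ b := fun a b h => Nat.pow_le_pow_right (by norm_num) h
  have h1 : 2 ^ (3 * t) ≤ 2 ^ (4 * t) := hle _ _ (by omega)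
  have h2 : 2 ^ t ≤ 2 ^ (4 * t) - 2 ^ (3 * t) + 2 ^ (2 * t) := by
    have := hle t (2 * t) (by omega); omega
  zify [h1, h2]
  have e2 : (2:ℤ) ^ (2 * t) = 2 ^ t * 2 ^ t := by rw [two_mul, pow_add]
  have e3 : (2:ℤ) ^ (3 * t) = 2 ^ t * 2 ^ t * 2 ^ t := by
    rw [show 3 * t = t + t + t by ring, pow_add, pow_add]
  have e4 : (2:ℤ) ^ (4 * t) = 2 ^ t * 2 ^ t * 2 ^ t * 2 ^ t := by
    rw [show 4 * t = t + t + t + t by ring, pow_add, pow_add, pow_add]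
  have e5 : (2:ℤ) ^ (5 * t) = 2 ^ t * 2 ^ t * 2 ^ t * 2 ^ t * 2 ^ t := by
    rw [show 5 * t = t + t + t + t + t by ring, pow_add, pow_add, pow_add, pow_add]
  rw [e2, e3, e4, e5]; ring

/-- Substituting the permutation `x ↦ x^{2^k+1}` transforms the exponential sum of
`ax + bx^{2^{2k}-2^k+1} + cx^{2^{4k}-2^{3k}+2^{2k}-2^k+1}` into that of
`ax^{2^k+1} + bx^{2^{3k}+1} + cx^{2^{5k}+1}`. -/
theorem stmt_11 (n k : ℕ) (hn : Odd n) (hk : 0 < k) (hkn : Nat.gcd k n = 1)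
    (a b c : GaloisField 2 n) :
    (∑ x : GaloisField 2 n,
        if Algebra.trace (ZMod 2) (GaloisField 2 n)
            (a * x + b * x ^ (2 ^ (2 * k) - 2 ^ k + 1) +
              c * x ^ (2 ^ (4 * k) - 2 ^ (3 * k) + 2 ^ (2 * k) - 2 ^ k + 1)) = 0
        then (1 : ℤ) else -1) =
      ∑ x : GaloisField 2 n,
        if Algebra.trace (ZMod 2) (GaloisField 2 n)
            (a * x ^ (2 ^ k + 1) + b * x ^ (2 ^ (3 * k) + 1) + c * x ^ (2 ^ (5 * k) + 1)) = 0
        then (1 : ℤ) else -1 := by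
  refine (Fintype.sum_bijective (fun x : GaloisField 2 n => x ^ (2 ^ k + 1))
    (aux_bij hn hk hkn) _ _ ?_).symm
  intro x
  congr 2
  simp only [← pow_mul, aux_exp1 hk, aux_exp2 hk]
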